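/- In the fully connected conflict graph, every vertex (k,i,j) has degree exactly |R|(|R|−1) − 1 + (|K|−1)(4|R|−6), provided |R| ≥ 2. -/

import Mathlib

open Finset

lemma pairs_ne_card (R : Type*) [Fintype R] [DecidableEq R] :
    ((univ : Finset (R × R)).filter fun p => p.1 ≠ p.2).card
      = Fintype.card R * (Fintype.card R - 1) := by
  rw [card_filter, Fintype.sum_prod_type]
  have h : ∀ a : R, (∑ b : R, if (a, b).1 ≠ (a, b).2 then 1 else 0)
      = Fintype.card R - 1 := by
    intro a
    rw [← card_filter]
    simp only [ne_eq]
    rw [show ((univ : Finset R).filter fun b => ¬ a = b) = univ.filter fun b => a ≠ b from rfl,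
      Finset.filter_ne, card_erase_of_mem (mem_univ a), card_univ]
  simp only [h, sum_const, card_univ, smul_eq_mul]

lemma share_card (R : Type*) [Fintype R] [DecidableEq R] (hR : 2 ≤ Fintype.card R)
    {i j : R} (hij : i ≠ j) :
    ((univ : Finset (R × R)).filter fun p =>
        p.1 ≠ p.2 ∧ (i = p.1 ∨ i = p.2 ∨ j = p.1 ∨ j = p.2)).card
      = 4 * Fintype.card R - 6 := by
  rw [card_filter, Fintype.sum_prod_type]
  have fi : (∑ b : R, if (i, b).1 ≠ (i, b).2 ∧
      (i = (i, b).1 ∨ i = (i, b).2 ∨ j = (i, b).1 ∨ j = (i, b).2) then 1 else 0)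
      = Fintype.card R - 1 := by
    rw [← card_filter]
    have : ((univ : Finset R).filter fun b => (i, b).1 ≠ (i, b).2 ∧
        (i = (i, b).1 ∨ i = (i, b).2 ∨ j = (i, b).1 ∨ j = (i, b).2))
        = univ.filter fun b => i ≠ b := by
      apply filter_congr; intro b _; simp
    rw [this, Finset.filter_ne, card_erase_of_mem (mem_univ i), card_univ]
  have fj : (∑ b : R, if (j, b).1 ≠ (j, b).2 ∧
      (i = (j, b).1 ∨ i = (j, b).2 ∨ j = (j, b).1 ∨ j = (j, b).2) then 1 else 0)
      = Fintype.card R - 1 := by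
    rw [← card_filter]
    have : ((univ : Finset R).filter fun b => (j, b).1 ≠ (j, b).2 ∧
        (i = (j, b).1 ∨ i = (j, b).2 ∨ j = (j, b).1 ∨ j = (j, b).2))
        = univ.filter fun b => j ≠ b := by
      apply filter_congr; intro b _
      simp
    rw [this, Finset.filter_ne, card_erase_of_mem (mem_univ j), card_univ]
  have fo : ∀ a : R, a ≠ i → a ≠ j → (∑ b : R, if (a, b).1 ≠ (a, b).2 ∧
      (i = (a, b).1 ∨ i = (a, b).2 ∨ j = (a, b).1 ∨ j = (a, b).2) then 1 else 0)
      = 2 := by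
    intro a hai haj
    rw [← card_filter]
    have : ((univ : Finset R).filter fun b => (a, b).1 ≠ (a, b).2 ∧
        (i = (a, b).1 ∨ i = (a, b).2 ∨ j = (a, b).1 ∨ j = (a, b).2))
        = {i, j} := by
      ext b
      simp only [mem_filter, mem_univ, true_and, mem_insert, mem_singleton]
      constructor
      · rintro ⟨hab, h | h | h | h⟩
        · exact absurd h.symm hai
        · exact Or.inl h.symm
        · exact absurd h.symm haj
        · exact Or.inr h.symm
      · rintro (rfl | rfl)
        · exact ⟨hai, Or.inr (Or.inl rfl)⟩
        · exact ⟨haj, Or.inr (Or.inr (Or.inr rfl))⟩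
    rw [this, card_insert_of_notMem (by simpa using hij), card_singleton]
  rw [← Finset.add_sum_erase _ _ (mem_univ i), fi,
    ← Finset.add_sum_erase _ _ (mem_erase.mpr ⟨hij.symm, mem_univ j⟩), fj]
  have hrest : (∑ a ∈ (univ.erase i).erase j, ∑ b : R, if (a, b).1 ≠ (a, b).2 ∧
      (i = (a, b).1 ∨ i = (a, b).2 ∨ j = (a, b).1 ∨ j = (a, b).2) then 1 else 0)
      = (Fintype.card R - 1 - 1) * 2 := by
    have step : (∑ a ∈ (univ.erase i).erase j, ∑ b : R, if (a, b).1 ≠ (a, b).2 ∧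
        (i = (a, b).1 ∨ i = (a, b).2 ∨ j = (a, b).1 ∨ j = (a, b).2) then 1 else 0)
        = ∑ _ ∈ (univ.erase i).erase j, 2 :=
      Finset.sum_congr rfl (fun a ha =>
        fo a (ne_of_mem_erase (mem_of_mem_erase ha)) (ne_of_mem_erase ha))
    rw [step, sum_const,
      card_erase_of_mem (mem_erase.mpr ⟨hij.symm, mem_univ j⟩),
      card_erase_of_mem (mem_univ i), card_univ, smul_eq_mul]
  rw [hrest]
  omega

/-- The conflict graph on trip combinations `(k, i, j)` with `i ≠ j`:
two distinct trips are adjacent iff they share the vehicle or share a rider. -/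
def conflictGraph (K R : Type*) :
    SimpleGraph {p : K × R × R // p.2.1 ≠ p.2.2} where
  Adj v w := v ≠ w ∧ (v.1.1 = w.1.1 ∨ v.1.2.1 = w.1.2.1 ∨ v.1.2.1 = w.1.2.2 ∨
      v.1.2.2 = w.1.2.1 ∨ v.1.2.2 = w.1.2.2)
  symm := by
    constructor
    rintro v w ⟨hne, hc⟩
    refine ⟨hne.symm, ?_⟩
    rcases hc with h | h | h | h | h
    · exact Or.inl h.symm
    · exact Or.inr (Or.inl h.symm)
    · exact Or.inr (Or.inr (Or.inr (Or.inl h.symm)))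
    · exact Or.inr (Or.inr (Or.inl h.symm))
    · exact Or.inr (Or.inr (Or.inr (Or.inr h.symm)))
  loopless := by constructor; intro v h; exact h.1 rfl

theorem conflictGraph_degree (K R : Type*) [Fintype K] [Fintype R]
    (hK : 1 ≤ Fintype.card K) (hR : 2 ≤ Fintype.card R)
    (v : {p : K × R × R // p.2.1 ≠ p.2.2}) :
    ((conflictGraph K R).neighborSet v).ncard =
      Fintype.card R * (Fintype.card R - 1) - 1 +
        (Fintype.card K - 1) * (4 * Fintype.card R - 6) := by
  classical
  obtain ⟨⟨k, i, j⟩, hij⟩ := v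
  have hij' : i ≠ j := hij
  rw [Set.ncard_eq_toFinset_card']
  have key : ((conflictGraph K R).neighborSet ⟨(k, i, j), hij⟩).toFinset.card =
      ((univ : Finset (K × R × R)).filter fun q =>
        q.2.1 ≠ q.2.2 ∧ (k, i, j) ≠ q ∧
        (k = q.1 ∨ i = q.2.1 ∨ i = q.2.2 ∨ j = q.2.1 ∨ j = q.2.2)).card := by
    apply Finset.card_bij (fun w _ => w.1)
    · intro w hw
      rw [Set.mem_toFinset, SimpleGraph.mem_neighborSet] at hw
      obtain ⟨hne, hc⟩ := hw
      simp only [mem_filter, mem_univ, true_and]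
      exact ⟨w.2, fun h => hne (Subtype.ext h), hc⟩
    · intro a _ b _ h
      exact Subtype.ext h
    · intro q hq
      simp only [mem_filter, mem_univ, true_and] at hq
      exact ⟨⟨q, hq.1⟩, by
        rw [Set.mem_toFinset, SimpleGraph.mem_neighborSet]
        exact ⟨fun h => hq.2.1 (congrArg Subtype.val h), hq.2.2⟩, rfl⟩
  rw [key, card_filter, Fintype.sum_prod_type]
  have hk : (∑ p : R × R, if (k, p).2.1 ≠ (k, p).2.2 ∧ (k, i, j) ≠ (k, p) ∧
      (k = (k, p).1 ∨ i = (k, p).2.1 ∨ i = (k, p).2.2 ∨ j = (k, p).2.1 ∨ j = (k, p).2.2)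
      then 1 else 0) = Fintype.card R * (Fintype.card R - 1) - 1 := by
    rw [← card_filter]
    have hset : ((univ : Finset (R × R)).filter fun p => (k, p).2.1 ≠ (k, p).2.2 ∧
        (k, i, j) ≠ (k, p) ∧ (k = (k, p).1 ∨ i = (k, p).2.1 ∨ i = (k, p).2.2 ∨
          j = (k, p).2.1 ∨ j = (k, p).2.2))
        = ((univ : Finset (R × R)).filter fun p => p.1 ≠ p.2).erase (i, j) := by
      ext p
      simp only [mem_filter, mem_univ, true_and, mem_erase]
      constructor
      · rintro ⟨h1, h2, -⟩
        exact ⟨fun hp => h2 (by rw [hp]), h1⟩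
      · rintro ⟨hp, h1⟩
        exact ⟨h1, fun he => hp ((congrArg Prod.snd he).symm), Or.inl trivial⟩
    rw [hset, card_erase_of_mem (by simp [hij']), pairs_ne_card]
  have ho : ∀ a : K, a ≠ k → (∑ p : R × R, if (a, p).2.1 ≠ (a, p).2.2 ∧
      (k, i, j) ≠ (a, p) ∧ (k = (a, p).1 ∨ i = (a, p).2.1 ∨ i = (a, p).2.2 ∨
        j = (a, p).2.1 ∨ j = (a, p).2.2) then 1 else 0) = 4 * Fintype.card R - 6 := by
    intro a hak
    rw [← card_filter]
    have hset : ((univ : Finset (R × R)).filter fun p => (a, p).2.1 ≠ (a, p).2.2 ∧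
        (k, i, j) ≠ (a, p) ∧ (k = (a, p).1 ∨ i = (a, p).2.1 ∨ i = (a, p).2.2 ∨
          j = (a, p).2.1 ∨ j = (a, p).2.2))
        = (univ : Finset (R × R)).filter fun p =>
            p.1 ≠ p.2 ∧ (i = p.1 ∨ i = p.2 ∨ j = p.1 ∨ j = p.2) := by
      apply filter_congr
      intro p _
      constructor
      · rintro ⟨h1, -, (h | h)⟩
        · exact absurd h.symm hak
        · exact ⟨h1, h⟩
      · rintro ⟨h1, h⟩
        exact ⟨h1, fun he => hak (congrArg Prod.fst he).symm, Or.inr h⟩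
    rw [hset, share_card R hR hij']
  rw [← Finset.add_sum_erase _ _ (mem_univ k), hk]
  have hrest : (∑ a ∈ univ.erase k, ∑ p : R × R, if (a, p).2.1 ≠ (a, p).2.2 ∧
      (k, i, j) ≠ (a, p) ∧ (k = (a, p).1 ∨ i = (a, p).2.1 ∨ i = (a, p).2.2 ∨
        j = (a, p).2.1 ∨ j = (a, p).2.2) then 1 else 0)
      = ∑ _ ∈ univ.erase k, (4 * Fintype.card R - 6) :=
    Finset.sum_congr rfl (fun a ha => ho a (ne_of_mem_erase ha))
  rw [hrest, sum_const, card_erase_of_mem (mem_univ k), card_univ, smul_eq_mul]
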